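/- arXiv:0910.1555 — 4 statements merged into one kernel-verified Lean document; each statement's English description precedes it below -/
import Mathlib

section
/- Subdivision lemma for r-variation: let γ : [a,b] → X be a continuous curve in a metric space with finite r-variation (1 ≤ r < ∞), and assume the function t ↦ ‖γ|_{[a,t]}‖_{V^r} is continuous. Then there exists t* ∈ [a,b] such that, writing γ₁ = γ|_{[a,t*]} and γ₂ = γ|_{[t*,b]}, one has ‖γ₁‖_{V^r} ≤ 2^{-1/r} ‖γ‖_{V^r} and ‖γ₂‖_{V^r} ≤ 2^{-1/r} ‖γ‖_{V^r}. -/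
open MeasureTheory
open scoped ENNReal

/-- The `r`-variation of a path `γ` over the interval `[a,b]`. -/
noncomputable def pathVar {X : Type*} [MetricSpace X] (r a b : ℝ) (γ : ℝ → X) : ℝ≥0∞ :=
  ⨆ (n : ℕ) (t : ℕ → ℝ) (_ : t 0 = a ∧ t n = b ∧ ∀ i < n, t i < t (i + 1)),
    (∑ j ∈ Finset.range n, ENNReal.ofReal (dist (γ (t (j + 1))) (γ (t j)) ^ r)) ^ (1 / r)

namespace PathVarAux

variable {X : Type*} [MetricSpace X]

def IsPart (a b : ℝ) (p : ℕ × (ℕ → ℝ)) : Prop :=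
  p.2 0 = a ∧ p.2 p.1 = b ∧ ∀ i < p.1, p.2 i < p.2 (i + 1)

noncomputable def pS (r : ℝ) (γ : ℝ → X) (p : ℕ × (ℕ → ℝ)) : ℝ≥0∞ :=
  ∑ j ∈ Finset.range p.1, ENNReal.ofReal (dist (γ (p.2 (j + 1))) (γ (p.2 j)) ^ r)

noncomputable def pVP (r a b : ℝ) (γ : ℝ → X) : ℝ≥0∞ :=
  ⨆ p : {p : ℕ × (ℕ → ℝ) // IsPart a b p}, pS r γ p.1

lemma nonempty_part {a b : ℝ} (hab : a ≤ b) : Nonempty {p : ℕ × (ℕ → ℝ) // IsPart a b p} := by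
  rcases eq_or_lt_of_le hab with h | h
  · exact ⟨⟨(0, fun _ => a), rfl, h ▸ rfl, by omega⟩⟩
  · refine ⟨⟨(1, fun i => if i = 0 then a else b), by simp, by simp, ?_⟩⟩
    intro i hi
    interval_cases i
    simpa using h

lemma pathVar_eq (r a b : ℝ) (γ : ℝ → X) :
    pathVar r a b γ = ⨆ p : {p : ℕ × (ℕ → ℝ) // IsPart a b p}, (pS r γ p.1) ^ (1 / r) := by
  apply le_antisymm
  · refine iSup_le fun n => iSup_le fun t => iSup_le fun h => ?_
    exact le_iSup (fun p : {p : ℕ × (ℕ → ℝ) // IsPart a b p} => (pS r γ p.1) ^ (1 / r)) ⟨(n, t), h⟩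
  · refine iSup_le fun p => ?_
    obtain ⟨⟨n, t⟩, h⟩ := p
    exact le_iSup_of_le n (le_iSup_of_le t (le_iSup_of_le h (le_refl _)))

lemma pathVar_eq_rpow {r : ℝ} (hr : 0 < r) (a b : ℝ) (γ : ℝ → X) :
    pathVar r a b γ = (pVP r a b γ) ^ (1 / r) := by
  rw [pathVar_eq, pVP]
  exact (map_iSup (ENNReal.orderIsoRpow (1 / r) (by positivity)) _).symm

lemma pVP_eq_pathVar_rpow {r : ℝ} (hr : 0 < r) (a b : ℝ) (γ : ℝ → X) :
    pVP r a b γ = (pathVar r a b γ) ^ r := by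
  rw [pathVar_eq_rpow hr, ← ENNReal.rpow_mul, one_div_mul_cancel hr.ne', ENNReal.rpow_one]

def pconcat (P Q : ℕ × (ℕ → ℝ)) : ℕ × (ℕ → ℝ) :=
  (P.1 + Q.1, fun i => if i ≤ P.1 then P.2 i else Q.2 (i - P.1))

lemma pconcat_le {P Q : ℕ × (ℕ → ℝ)} {i : ℕ} (h : i ≤ P.1) : (pconcat P Q).2 i = P.2 i :=
  if_pos h

lemma pconcat_ge {a b c : ℝ} {P Q : ℕ × (ℕ → ℝ)} (hP : IsPart a c P) (hQ : IsPart c b Q)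
    {i : ℕ} (h : P.1 ≤ i) : (pconcat P Q).2 i = Q.2 (i - P.1) := by
  rcases eq_or_lt_of_le h with h' | h'
  · simp only [pconcat, ← h', le_refl, if_pos, Nat.sub_self]
    rw [hP.2.1, hQ.1]
  · exact if_neg (by omega)

lemma isPart_pconcat {a b c : ℝ} {P Q : ℕ × (ℕ → ℝ)} (hP : IsPart a c P) (hQ : IsPart c b Q) :
    IsPart a b (pconcat P Q) := by
  refine ⟨?_, ?_, ?_⟩
  · rw [pconcat_le (Nat.zero_le _), hP.1]
  · rw [show (pconcat P Q).1 = P.1 + Q.1 from rfl, pconcat_ge hP hQ (Nat.le_add_right _ _),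
      Nat.add_sub_cancel_left, hQ.2.1]
  · intro i hi
    rcases lt_or_ge i P.1 with h | h
    · rw [pconcat_le h.le, pconcat_le h]
      exact hP.2.2 i h
    · rw [pconcat_ge hP hQ h, pconcat_ge hP hQ (h.trans (Nat.le_succ _)),
        show i + 1 - P.1 = (i - P.1) + 1 by omega]
      refine hQ.2.2 _ ?_
      have : (pconcat P Q).1 = P.1 + Q.1 := rfl
      omega

lemma pS_pconcat {a b c : ℝ} (r : ℝ) (γ : ℝ → X) {P Q : ℕ × (ℕ → ℝ)}
    (hP : IsPart a c P) (hQ : IsPart c b Q) :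
    pS r γ (pconcat P Q) = pS r γ P + pS r γ Q := by
  show ∑ j ∈ Finset.range (P.1 + Q.1), _ = _
  rw [Finset.sum_range_add]
  congr 1
  · refine Finset.sum_congr rfl fun j hj => ?_
    rw [Finset.mem_range] at hj
    rw [pconcat_le hj.le, pconcat_le hj]
  · refine Finset.sum_congr rfl fun j hj => ?_
    rw [Finset.mem_range] at hj
    rw [pconcat_ge hP hQ (Nat.le_add_right _ _), pconcat_ge hP hQ (by omega),
      Nat.add_sub_cancel_left, show P.1 + j + 1 - P.1 = j + 1 by omega]

lemma pVP_concat_le {a b c : ℝ} (r : ℝ) (γ : ℝ → X) (hac : a ≤ c) (hcb : c ≤ b) :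
    pVP r a c γ + pVP r c b γ ≤ pVP r a b γ := by
  haveI := nonempty_part hac
  haveI := nonempty_part hcb
  refine ENNReal.iSup_add_iSup_le fun P Q => ?_
  rw [← pS_pconcat r γ P.2 Q.2]
  exact le_iSup (fun p : {p : ℕ × (ℕ → ℝ) // IsPart a b p} => pS r γ p.1)
    ⟨pconcat P.1 Q.1, isPart_pconcat P.2 Q.2⟩

lemma pathVar_self {r : ℝ} (hr : 0 < r) (a : ℝ) (γ : ℝ → X) : pathVar r a a γ = 0 := by
  rw [pathVar_eq]
  refine le_antisymm (iSup_le fun p => ?_) (zero_le)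
  obtain ⟨⟨n, t⟩, h0, hn, hmono⟩ := p
  have hn0 : n = 0 := by
    by_contra hne
    have key : ∀ m, m ≤ n → t 0 ≤ t m := by
      intro m
      induction m with
      | zero => intro _; exact le_refl _
      | succ k ih => intro h; exact (ih (by omega)).trans (hmono k (by omega)).le
    have h1 : t (n - 1) < t (n - 1 + 1) := hmono _ (by omega)
    have h2 : t 0 ≤ t (n - 1) := key _ (by omega)
    have : n - 1 + 1 = n := by omega
    rw [this] at h1
    simp only at h0 hn
    simp only [h0, hn] at h1 h2
    linarith
  subst hn0
  simp only [pS, Finset.range_zero, Finset.sum_empty]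
  rw [ENNReal.zero_rpow_of_pos (by positivity)]

end PathVarAux

open PathVarAux in
/-- Subdivision lemma: a continuous curve of finite r-variation (with continuously varying
partial variation) can be split at a point `t*` into two subcurves each of r-variation at most
`2^{-1/r}` times the total r-variation. -/
theorem pathVar_subdivide {X : Type*} [MetricSpace X] (γ : ℝ → X) (a b r : ℝ)
    (hab : a ≤ b) (hr : 1 ≤ r)
    (hcont : ContinuousOn γ (Set.Icc a b))
    (hfin : pathVar r a b γ ≠ ⊤)
    (hvarcont : ContinuousOn (fun t => (pathVar r a t γ).toReal) (Set.Icc a b)) :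
    ∃ t₀ ∈ Set.Icc a b,
      pathVar r a t₀ γ ≤ ENNReal.ofReal ((2 : ℝ) ^ (-(1 / r))) * pathVar r a b γ ∧
      pathVar r t₀ b γ ≤ ENNReal.ofReal ((2 : ℝ) ^ (-(1 / r))) * pathVar r a b γ := by
  have hr0 : 0 < r := lt_of_lt_of_le one_pos hr
  set c : ℝ := (2 : ℝ) ^ (-(1 / r)) with hc
  have hc0 : 0 < c := Real.rpow_pos_of_pos two_pos _
  have hc1 : c ≤ 1 := Real.rpow_le_one_of_one_le_of_nonpos one_le_two (neg_nonpos.mpr (by positivity))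
  set C : ℝ := (pathVar r a b γ).toReal with hC
  have hC0 : 0 ≤ C := ENNReal.toReal_nonneg
  -- find t₀ by IVT
  have hmem : c * C ∈ Set.Icc ((fun t => (pathVar r a t γ).toReal) a)
      ((fun t => (pathVar r a t γ).toReal) b) := by
    simp only [pathVar_self hr0 a γ, ENNReal.toReal_zero]
    constructor
    · positivity
    · calc c * C ≤ 1 * C := by nlinarith
        _ = C := one_mul C
  obtain ⟨t₀, ht₀mem, ht₀⟩ := intermediate_value_Icc hab hvarcont hmem
  refine ⟨t₀, ht₀mem, ?_⟩
  obtain ⟨hat₀, ht₀b⟩ := ht₀mem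
  -- finiteness facts
  have hTp : pVP r a b γ ≠ ⊤ := by
    rw [pVP_eq_pathVar_rpow hr0]
    exact ENNReal.rpow_ne_top_of_nonneg hr0.le hfin
  have h1le : pVP r a t₀ γ ≤ pVP r a b γ :=
    le_trans le_self_add (pVP_concat_le r γ hat₀ ht₀b)
  have h2le : pVP r t₀ b γ ≤ pVP r a b γ :=
    le_trans le_add_self (pVP_concat_le r γ hat₀ ht₀b)
  have hV1top : pathVar r a t₀ γ ≠ ⊤ := by
    rw [pathVar_eq_rpow hr0]
    exact ENNReal.rpow_ne_top_of_nonneg (by positivity) (ne_top_of_le_ne_top hTp h1le)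
  have hV2top : pathVar r t₀ b γ ≠ ⊤ := by
    rw [pathVar_eq_rpow hr0]
    exact ENNReal.rpow_ne_top_of_nonneg (by positivity) (ne_top_of_le_ne_top hTp h2le)
  set A : ℝ := (pathVar r a t₀ γ).toReal with hA
  set B : ℝ := (pathVar r t₀ b γ).toReal with hB
  have hA0 : 0 ≤ A := ENNReal.toReal_nonneg
  have hB0 : 0 ≤ B := ENNReal.toReal_nonneg
  have hAval : A = c * C := ht₀
  -- key real inequality
  have hkey : A ^ r + B ^ r ≤ C ^ r := by
    have h := ENNReal.toReal_mono hTp (pVP_concat_le r γ hat₀ ht₀b)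
    rw [ENNReal.toReal_add (ne_top_of_le_ne_top hTp h1le) (ne_top_of_le_ne_top hTp h2le)] at h
    rw [pVP_eq_pathVar_rpow hr0 a t₀, pVP_eq_pathVar_rpow hr0 t₀ b,
      pVP_eq_pathVar_rpow hr0 a b, ← ENNReal.toReal_rpow, ← ENNReal.toReal_rpow,
      ← ENNReal.toReal_rpow] at h
    exact h
  have hcr : c ^ r = 1 / 2 := by
    rw [hc, ← Real.rpow_mul (by norm_num : (0:ℝ) ≤ 2),
      show -(1 / r) * r = -1 by field_simp, Real.rpow_neg_one]
    norm_num
  have hBr : B ^ r ≤ (1 / 2) * C ^ r := by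
    have hAr : A ^ r = (1 / 2) * C ^ r := by
      rw [hAval, Real.mul_rpow hc0.le hC0, hcr]
    linarith
  have hBle : B ≤ c * C := by
    calc B = (B ^ r) ^ (1 / r) := by
          rw [← Real.rpow_mul hB0, mul_one_div, div_self hr0.ne', Real.rpow_one]
      _ ≤ ((1 / 2) * C ^ r) ^ (1 / r) :=
          Real.rpow_le_rpow (by positivity) hBr (by positivity)
      _ = c * C := by
          rw [Real.mul_rpow (by norm_num) (by positivity), ← Real.rpow_mul hC0,
            mul_one_div, div_self hr0.ne', Real.rpow_one]
          congr 1
          rw [hc, show (1 / 2 : ℝ) = 2 ^ (-1 : ℝ) by rw [Real.rpow_neg_one]; norm_num,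
            ← Real.rpow_mul (by norm_num : (0:ℝ) ≤ 2)]
          norm_num
  have hofC : ENNReal.ofReal C = pathVar r a b γ := by
    rw [hC, ENNReal.ofReal_toReal hfin]
  constructor
  · rw [← ENNReal.ofReal_toReal hV1top, ← hA, hAval, ENNReal.ofReal_mul hc0.le, hofC]
  · rw [← ENNReal.ofReal_toReal hV2top, ← hB]
    calc ENNReal.ofReal B ≤ ENNReal.ofReal (c * C) := ENNReal.ofReal_le_ofReal hBle
      _ = ENNReal.ofReal c * pathVar r a b γ := by rw [ENNReal.ofReal_mul hc0.le, hofC]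
end

section
/- Variational Christ–Kiselev lemma (splitting step): let T_≤ f(x,N) = ∫_{y<N} K(x,y) f(y) dy be the partial integrals of an integral operator, let f ∈ L^p(ℝ) with ‖f‖_p = 1, and let N₀ satisfy ∫_{-∞}^{N₀} |f|^p = ∫_{N₀}^{∞} |f|^p = 1/2. Write f₋ = f·1_{(-∞,N₀]} and f₊ = f·1_{[N₀,∞)}. Then for every x, ‖T_≤ f(x,·)‖_{V^r_N} ≤ (‖T_≤ f₋(x,·)‖_{V^r_N}^r + ‖T_≤ f₊(x,·)‖_{V^r_N}^r)^{1/r} + 4 T_* f(x), where T_* f(x) = sup_N |T_≤ f(x,N)|. -/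
open MeasureTheory
open scoped ENNReal

/-- Partial integrals `T_≤ f(x,N) = ∫_{y<N} K(x,y) f(y) dy`. -/
noncomputable def Tle (K : ℝ → ℝ → ℂ) (f : ℝ → ℂ) (x N : ℝ) : ℂ :=
  ∫ y in Set.Iio N, K x y * f y

/-- The `r`-variation (in the parameter) of a function `F : ℝ → ℂ`. -/
noncomputable def varR (r : ℝ) (F : ℝ → ℂ) : ℝ≥0∞ :=
  ⨆ (n : ℕ) (t : ℕ → ℝ) (_ : ∀ i < n, t i < t (i + 1)),
    (∑ j ∈ Finset.range n, ENNReal.ofReal (‖F (t (j + 1)) - F (t j)‖ ^ r)) ^ (1 / r)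

section auxLemmas

variable {K : ℝ → ℝ → ℂ} {f : ℝ → ℂ} {x N₀ : ℝ}

/-- Monotonicity along a locally increasing sequence. -/
lemma ck_mono {n : ℕ} {t : ℕ → ℝ} (ht : ∀ i < n, t i < t (i + 1)) :
    ∀ {j k : ℕ}, j ≤ k → k ≤ n → t j ≤ t k := by
  intro j k hjk hkn
  induction k with
  | zero => interval_cases j; exact le_rfl
  | succ k ih =>
    rcases Nat.lt_or_ge j (k + 1) with h | h
    · exact (ih (Nat.lt_succ_iff.mp h) (le_trans (Nat.le_succ k) hkn)).trans
        (ht k (Nat.lt_of_succ_le hkn)).le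
    · have hjk' : j = k + 1 := le_antisymm hjk h
      simp [hjk']

lemma ck_sum_shift (g : ℕ → ℝ≥0∞) (m k : ℕ) :
    ∑ j ∈ Finset.range (m + k), g j
      = ∑ j ∈ Finset.range m, g j + ∑ j ∈ Finset.range k, g (m + j) := by
  induction k with
  | zero => simp
  | succ k ih =>
    rw [Nat.add_succ, Finset.sum_range_succ, Finset.sum_range_succ, ih, add_assoc]

lemma Tle_eq_left {N : ℝ} (h : N ≤ N₀) :
    Tle K (fun y => if y ≤ N₀ then f y else 0) x N = Tle K f x N := by
  unfold Tle
  refine setIntegral_congr_fun measurableSet_Iio fun y hy => ?_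
  have hy' : y ≤ N₀ := le_of_lt (lt_of_lt_of_le hy h)
  simp [hy']

lemma ck_plus_eq :
    (fun y => K x y * (if N₀ ≤ y then f y else 0))
      = (Set.Ici N₀).indicator (fun y => K x y * f y) := by
  funext y
  by_cases h : N₀ ≤ y <;> simp [Set.indicator_apply, Set.mem_Ici, h]

lemma Tle_diff (hint : Integrable (fun y => K x y * f y)) {a b : ℝ} (hab : a ≤ b) :
    Tle K f x b - Tle K f x a = ∫ y in Set.Ico a b, K x y * f y := by
  unfold Tle
  rw [← Set.Iio_union_Ico_eq_Iio hab,
    setIntegral_union ((Set.Iio_disjoint_Ici le_rfl).mono_right Set.Ico_subset_Ici_self)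
      measurableSet_Ico hint.integrableOn hint.integrableOn]
  ring

lemma Tle_diff_right (hint : Integrable (fun y => K x y * f y)) {a b : ℝ}
    (hN : N₀ ≤ a) (hab : a ≤ b) :
    Tle K f x b - Tle K f x a
      = Tle K (fun y => if N₀ ≤ y then f y else 0) x b
        - Tle K (fun y => if N₀ ≤ y then f y else 0) x a := by
  have hint' : Integrable (fun y => K x y * (if N₀ ≤ y then f y else 0)) := by
    rw [ck_plus_eq]; exact hint.indicator measurableSet_Ici
  rw [Tle_diff hint hab, Tle_diff hint' hab]
  refine (setIntegral_congr_fun measurableSet_Ico fun y hy => ?_).symm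
  have : N₀ ≤ y := hN.trans hy.1
  simp [this]

lemma le_varR {r : ℝ} (G : ℝ → ℂ) (n : ℕ) (t : ℕ → ℝ)
    (ht : ∀ i < n, t i < t (i + 1)) :
    (∑ j ∈ Finset.range n,
        ENNReal.ofReal (‖G (t (j + 1)) - G (t j)‖ ^ r)) ^ (1 / r)
      ≤ varR r G := by
  unfold varR
  exact le_iSup_of_le n (le_iSup_of_le t (le_iSup_of_le ht le_rfl))

lemma sum_le_varR_pow {r : ℝ} (hr0 : 0 < r) (G : ℝ → ℂ) (n : ℕ) (t : ℕ → ℝ)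
    (ht : ∀ i < n, t i < t (i + 1)) :
    (∑ j ∈ Finset.range n,
        ENNReal.ofReal (‖G (t (j + 1)) - G (t j)‖ ^ r))
      ≤ varR r G ^ r := by
  set S := ∑ j ∈ Finset.range n,
      ENNReal.ofReal (‖G (t (j + 1)) - G (t j)‖ ^ r) with hS
  have h1 : S ^ (1 / r) ≤ varR r G := le_varR G n t ht
  calc S = (S ^ (1 / r)) ^ r := by
        rw [← ENNReal.rpow_mul, one_div_mul_cancel hr0.ne', ENNReal.rpow_one]
    _ ≤ varR r G ^ r := ENNReal.rpow_le_rpow h1 hr0.le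

end auxLemmas

/-- Variational Christ–Kiselev lemma, splitting step: if `N₀` halves the `L^p` mass of `f`
(with `‖f‖_p = 1`), `f₋ = f·1_{(-∞,N₀]}`, `f₊ = f·1_{[N₀,∞)}`, then pointwise in `x`,
`‖T_≤ f(x,·)‖_{V^r} ≤ (‖T_≤ f₋(x,·)‖_{V^r}^r + ‖T_≤ f₊(x,·)‖_{V^r}^r)^{1/r} + 4 T_* f(x)`. -/
theorem christ_kiselev_split (K : ℝ → ℝ → ℂ) (f : ℝ → ℂ) (p r N₀ x : ℝ)
    (hp : 1 ≤ p) (hr : 2 ≤ r)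
    (hnorm : (∫ y, ‖f y‖ ^ p) = 1)
    (hhalf₁ : (∫ y in Set.Iio N₀, ‖f y‖ ^ p) = 1 / 2)
    (hhalf₂ : (∫ y in Set.Ioi N₀, ‖f y‖ ^ p) = 1 / 2)
    (hint : Integrable (fun y => K x y * f y)) :
    varR r (Tle K f x) ≤
      (varR r (Tle K (fun y => if y ≤ N₀ then f y else 0) x) ^ r +
        varR r (Tle K (fun y => if N₀ ≤ y then f y else 0) x) ^ r) ^ (1 / r) +
      4 * ⨆ N : ℝ, ENNReal.ofReal (‖Tle K f x N‖) := by
  classical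
  have hr0 : (0 : ℝ) < r := lt_of_lt_of_le two_pos hr
  set F := Tle K f x with hF
  set Fm := Tle K (fun y => if y ≤ N₀ then f y else 0) x with hFm
  set Fp := Tle K (fun y => if N₀ ≤ y then f y else 0) x with hFp
  set S : ℝ≥0∞ := ⨆ N : ℝ, ENNReal.ofReal (‖F N‖) with hSdef
  set V : ℝ≥0∞ := (varR r Fm ^ r + varR r Fp ^ r) ^ (1 / r) with hV
  -- it suffices to bound each partition sum
  have key : ∀ (n : ℕ) (t : ℕ → ℝ), (∀ i < n, t i < t (i + 1)) →
      (∑ j ∈ Finset.range n,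
          ENNReal.ofReal (‖F (t (j + 1)) - F (t j)‖ ^ r)) ^ (1 / r)
        ≤ V + 4 * S := by
    intro n t ht
    set g : ℕ → ℝ≥0∞ := fun j =>
      ENNReal.ofReal (‖F (t (j + 1)) - F (t j)‖ ^ r) with hg
    have hmono : ∀ j k, j ≤ k → k ≤ n → t j ≤ t k := fun _ _ hjk hkn => ck_mono ht hjk hkn
    have hsub : varR r Fp ^ r ≤ varR r Fm ^ r + varR r Fp ^ r := le_add_self
    have hsubm : varR r Fm ^ r ≤ varR r Fm ^ r + varR r Fp ^ r := le_self_add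
    have hVpow : ∀ {X : ℝ≥0∞}, X ≤ varR r Fm ^ r + varR r Fp ^ r →
        X ^ (1 / r) ≤ V := fun hX =>
      ENNReal.rpow_le_rpow hX (by positivity)
    by_cases h0 : t 0 ≤ N₀
    · by_cases hn : t n ≤ N₀
      · -- everything to the left of N₀
        have hsum : ∑ j ∈ Finset.range n, g j
            = ∑ j ∈ Finset.range n,
                ENNReal.ofReal (‖Fm (t (j + 1)) - Fm (t j)‖ ^ r) := by
          refine Finset.sum_congr rfl fun j hj => ?_
          have hj' : j < n := Finset.mem_range.mp hj
          have h1 : t (j + 1) ≤ N₀ := (hmono _ _ (Nat.succ_le_of_lt hj') le_rfl).trans hn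
          have h2 : t j ≤ N₀ := (hmono _ _ (Nat.le_of_lt hj') le_rfl).trans hn
          simp only [hg, hF, hFm]
          rw [Tle_eq_left h1, Tle_eq_left h2]
        have : ∑ j ∈ Finset.range n, g j ≤ varR r Fm ^ r := by
          rw [hsum]; exact sum_le_varR_pow hr0 Fm n t ht
        exact le_trans (hVpow (this.trans hsubm)) le_self_add
      · -- t 0 ≤ N₀ < t n : crossing case
        push_neg at hn
        have hn1 : 1 ≤ n := by
          rcases Nat.eq_zero_or_pos n with h | h
          · exfalso; rw [h] at hn; exact absurd h0 (not_le.mpr hn)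
          · exact h
        have hex : ∃ k, k < n ∧ N₀ < t (k + 1) :=
          ⟨n - 1, by omega, by rwa [Nat.sub_add_cancel hn1]⟩
        set m := Nat.find hex with hm
        obtain ⟨hmn, hmcross⟩ := Nat.find_spec hex
        have htm : t m ≤ N₀ := by
          rcases Nat.eq_zero_or_pos m with h | h
          · rw [h]; exact h0
          · have := Nat.find_min hex (Nat.sub_lt h one_pos)
            push_neg at this
            have h1 : m - 1 < n := by omega
            have h2 := this h1
            rw [← hm] at h2
            have h3 : m - 1 + 1 = m := by omega
            rwa [h3] at h2
        set k := n - (m + 1) with hk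
        have hn_eq : n = m + 1 + k := by omega
        -- split the sum
        have hsplit : ∑ j ∈ Finset.range n, g j
            = (∑ j ∈ Finset.range m, g j + g m) + ∑ j ∈ Finset.range k, g (m + 1 + j) := by
          rw [hn_eq, ck_sum_shift g (m + 1) k, Finset.sum_range_succ]
        -- left part
        have hleft : ∑ j ∈ Finset.range m, g j ≤ varR r Fm ^ r := by
          have hsum : ∑ j ∈ Finset.range m, g j
              = ∑ j ∈ Finset.range m,
                  ENNReal.ofReal (‖Fm (t (j + 1)) - Fm (t j)‖ ^ r) := by
            refine Finset.sum_congr rfl fun j hj => ?_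
            have hj' : j < m := Finset.mem_range.mp hj
            have h1 : t (j + 1) ≤ N₀ :=
              (hmono _ _ (Nat.succ_le_of_lt hj') (Nat.le_of_lt hmn)).trans htm
            have h2 : t j ≤ N₀ :=
              (hmono _ _ (Nat.le_of_lt hj') (Nat.le_of_lt hmn)).trans htm
            simp only [hg, hF, hFm]
            rw [Tle_eq_left h1, Tle_eq_left h2]
          rw [hsum]
          exact sum_le_varR_pow hr0 Fm m t fun i hi => ht i (lt_trans hi hmn)
        -- right part
        have hright : ∑ j ∈ Finset.range k, g (m + 1 + j) ≤ varR r Fp ^ r := by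
          set t' : ℕ → ℝ := fun j => t (m + 1 + j) with ht'
          have ht'incr : ∀ i < k, t' i < t' (i + 1) := by
            intro i hi
            exact ht (m + 1 + i) (by omega)
          have hsum : ∑ j ∈ Finset.range k, g (m + 1 + j)
              = ∑ j ∈ Finset.range k,
                  ENNReal.ofReal (‖Fp (t' (j + 1)) - Fp (t' j)‖ ^ r) := by
            refine Finset.sum_congr rfl fun j hj => ?_
            have hj' : j < k := Finset.mem_range.mp hj
            have hNa : N₀ ≤ t (m + 1 + j) :=
              le_of_lt (lt_of_lt_of_le hmcross (hmono _ _ (Nat.le_add_right _ _) (by omega)))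
            have hab : t (m + 1 + j) ≤ t (m + 1 + j + 1) :=
              (ht (m + 1 + j) (by omega)).le
            have hdiff := Tle_diff_right (f := f) (K := K) (x := x) (N₀ := N₀)
              hint hNa hab
            simp only [hg, hF, hFp, ht']
            have hidx : m + 1 + (j + 1) = m + 1 + j + 1 := rfl
            rw [hidx, hdiff]
          rw [hsum]
          exact sum_le_varR_pow hr0 Fp k t' ht'incr
        -- crossing term
        have hcross : g m ^ (1 / r) ≤ 4 * S := by
          have habs : ‖F (t (m + 1)) - F (t m)‖
              ≤ ‖F (t (m + 1))‖ + ‖F (t m)‖ := by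
            have := norm_sub_le (F (t (m + 1))) (F (t m))
            simpa using this
          have h1 : g m ^ (1 / r) = ENNReal.ofReal (‖F (t (m + 1)) - F (t m)‖) := by
            simp only [hg]
            rw [← ENNReal.ofReal_rpow_of_nonneg (norm_nonneg _) hr0.le,
              ← ENNReal.rpow_mul, mul_one_div_cancel hr0.ne', ENNReal.rpow_one]
          rw [h1]
          calc ENNReal.ofReal (‖F (t (m + 1)) - F (t m)‖)
              ≤ ENNReal.ofReal (‖F (t (m + 1))‖ + ‖F (t m)‖) :=
                ENNReal.ofReal_le_ofReal habs
            _ ≤ ENNReal.ofReal (‖F (t (m + 1))‖)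
                + ENNReal.ofReal (‖F (t m)‖) := ENNReal.ofReal_add_le
            _ ≤ S + S := by
                rw [hSdef]; exact add_le_add (le_iSup (fun N => ENNReal.ofReal (‖F N‖)) (t (m + 1)))
                  (le_iSup (fun N => ENNReal.ofReal (‖F N‖)) (t m))
            _ = 2 * S := (two_mul S).symm
            _ ≤ 4 * S := mul_le_mul_left (by norm_num) S
        -- assemble
        have hsum_le : ∑ j ∈ Finset.range n, g j
            ≤ (varR r Fm ^ r + varR r Fp ^ r) + g m := by
          rw [hsplit]
          calc (∑ j ∈ Finset.range m, g j + g m) + ∑ j ∈ Finset.range k, g (m + 1 + j)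
              = (∑ j ∈ Finset.range m, g j + ∑ j ∈ Finset.range k, g (m + 1 + j)) + g m := by
                ring
            _ ≤ (varR r Fm ^ r + varR r Fp ^ r) + g m :=
                add_le_add_left (add_le_add hleft hright) _
        calc (∑ j ∈ Finset.range n, g j) ^ (1 / r)
            ≤ ((varR r Fm ^ r + varR r Fp ^ r) + g m) ^ (1 / r) :=
              ENNReal.rpow_le_rpow hsum_le (by positivity)
          _ ≤ (varR r Fm ^ r + varR r Fp ^ r) ^ (1 / r) + g m ^ (1 / r) :=
              ENNReal.rpow_add_le_add_rpow _ _ (by positivity)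
                (by rw [div_le_one hr0]; linarith)
          _ ≤ V + 4 * S := add_le_add_right hcross V
    · -- everything to the right of N₀
      push_neg at h0
      have hsum : ∑ j ∈ Finset.range n, g j
          = ∑ j ∈ Finset.range n,
              ENNReal.ofReal (‖Fp (t (j + 1)) - Fp (t j)‖ ^ r) := by
        refine Finset.sum_congr rfl fun j hj => ?_
        have hj' : j < n := Finset.mem_range.mp hj
        have hNa : N₀ ≤ t j :=
          le_of_lt (lt_of_lt_of_le h0 (hmono _ _ (Nat.zero_le _) (Nat.le_of_lt hj')))
        have hab : t j ≤ t (j + 1) := (ht j hj').le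
        have hdiff := Tle_diff_right (f := f) (K := K) (x := x) (N₀ := N₀) hint hNa hab
        simp only [hg, hF, hFp]
        rw [hdiff]
      have : ∑ j ∈ Finset.range n, g j ≤ varR r Fp ^ r := by
        rw [hsum]; exact sum_le_varR_pow hr0 Fp n t ht
      exact le_trans (hVpow (this.trans hsub)) le_self_add
  show varR r F ≤ V + 4 * S
  unfold varR
  exact iSup_le fun n => iSup_le fun t => iSup_le fun ht => key n t ht
end

section
/- Lower bound for the r-variation of Fourier partial sums of the de la Vallée-Poussin kernel: there exist constants c > 0 and N₀ such that for all integers N ≥ N₀ and all x with 8/N ≤ x ≤ 1/8, there exist integers 0 ≤ n_0 < n_1 < ... < n_{2K-1} ≤ N with K ≥ ⌊Nx⌋ - 1 such that (∑_{j=0}^{K-1} |D_{n_{2j+1}}(x) - D_{n_{2j}}(x)|^r)^{1/r} ≥ c N^{1/r} x^{1/r - 1}, where D_n(x) = sin((2n+1)πx)/sin(πx) is the Dirichlet kernel and r ≥ 1. -/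
open MeasureTheory

/-- The Dirichlet kernel `D_n(x) = sin((2n+1)πx)/sin(πx)`. -/
noncomputable def dirichletKer (n : ℕ) (x : ℝ) : ℝ :=
  Real.sin ((2 * n + 1) * Real.pi * x) / Real.sin (Real.pi * x)

lemma sin_lb_aux (u : ℝ) (h1 : 1/4 ≤ u) (h2 : u ≤ 1/2) :
    Real.sqrt 2 / 2 ≤ Real.sin (Real.pi * u) := by
  have hpi := Real.pi_pos
  have hm1 : Real.pi / 4 ∈ Set.Icc (-(Real.pi/2)) (Real.pi/2) := by
    constructor <;> nlinarith
  have hm2 : Real.pi * u ∈ Set.Icc (-(Real.pi/2)) (Real.pi/2) := by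
    constructor <;> nlinarith
  have := Real.strictMonoOn_sin.monotoneOn hm1 hm2 (by nlinarith)
  rwa [Real.sin_pi_div_four] at this

lemma sin_shift (u : ℝ) (j : ℕ) : Real.sin (Real.pi * (u + 2*j)) = Real.sin (Real.pi * u) := by
  have := Real.sin_add_int_mul_two_pi (Real.pi * u) (j : ℤ)
  rw [← this]
  push_cast
  ring_nf

lemma sin_even (j : ℕ) (t : ℝ) (h1 : (2*j : ℝ) + 1/4 ≤ t) (h2 : t ≤ (2*j : ℝ) + 1/2) :
    Real.sqrt 2 / 2 ≤ Real.sin (Real.pi * t) := by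
  have h := sin_shift (t - 2*j) j
  rw [show t - 2*(j:ℝ) + 2*j = t by ring] at h
  rw [h]
  exact sin_lb_aux _ (by linarith) (by linarith)

lemma sin_odd (j : ℕ) (t : ℝ) (h1 : (2*j : ℝ) + 1 + 1/4 ≤ t) (h2 : t ≤ (2*j : ℝ) + 1 + 1/2) :
    Real.sin (Real.pi * t) ≤ -(Real.sqrt 2 / 2) := by
  have h := sin_shift (t - 2*j) j
  rw [show t - 2*(j:ℝ) + 2*j = t by ring] at h
  rw [h]
  have h2' : Real.sin (Real.pi * (t - 2*j)) = -Real.sin (Real.pi * (t - 2*j - 1)) := by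
    rw [show Real.pi * (t - 2*j) = Real.pi * (t - 2*j - 1) + Real.pi by ring, Real.sin_add_pi]
  rw [h2']
  have := sin_lb_aux (t - 2*j - 1) (by linarith) (by linarith)
  linarith

/-- choice of odd multiples -/
noncomputable def nfun (x : ℝ) (k : ℕ) : ℕ := (⌈(((k:ℝ) + 1/4)/x - 1)/2⌉).toNat

lemma nfun_mem (x : ℝ) (hx : 0 < x) (hx8 : x ≤ 1/8) (k : ℕ) :
    (k : ℝ) + 1/4 ≤ (2 * nfun x k + 1) * x ∧ (2 * nfun x k + 1) * x ≤ (k:ℝ) + 1/2 := by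
  set y : ℝ := (((k:ℝ) + 1/4)/x - 1)/2 with hy
  have hk4 : (2:ℝ) ≤ ((k:ℝ) + 1/4)/x := by
    rw [le_div_iff₀ hx]
    have : (0:ℝ) ≤ k := Nat.cast_nonneg k
    linarith
  have hy2 : (1:ℝ)/2 ≤ y := by rw [hy]; linarith
  have hceil : (1:ℤ) ≤ ⌈y⌉ := by
    have : (0:ℤ) < ⌈y⌉ := Int.ceil_pos.mpr (by linarith)
    omega
  have hcast : ((nfun x k : ℕ) : ℝ) = (⌈y⌉ : ℝ) := by
    unfold nfun
    rw [← hy]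
    exact_mod_cast congrArg Int.cast (Int.toNat_of_nonneg (by linarith))
  have hge : y ≤ (nfun x k : ℝ) := by rw [hcast]; exact Int.le_ceil y
  have hle : (nfun x k : ℝ) ≤ y + 1 := by
    rw [hcast]; exact le_of_lt (Int.ceil_lt_add_one y)
  constructor
  · have h' : ((k:ℝ) + 1/4)/x ≤ 2 * (nfun x k) + 1 := by rw [hy] at hge; linarith
    have h2 := mul_le_mul_of_nonneg_right h' hx.le
    rw [div_mul_cancel₀ _ hx.ne'] at h2
    push_cast
    nlinarith
  · have h1 : (2 * (nfun x k : ℝ) + 1) ≤ ((k:ℝ) + 1/4)/x + 2 := by rw [hy] at hle; linarith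
    have h3 : (2 * (nfun x k : ℝ) + 1) * x ≤ (((k:ℝ) + 1/4)/x + 2) * x :=
      mul_le_mul_of_nonneg_right h1 hx.le
    have h2 : (((k:ℝ) + 1/4)/x + 2) * x = (k:ℝ) + 1/4 + 2*x := by field_simp
    rw [h2] at h3
    push_cast
    linarith

set_option maxHeartbeats 1600000 in
/-- Lower bound for the r-variation of Fourier partial sums of the de la Vallée-Poussin kernel:
for `N` large and `8/N ≤ x ≤ 1/8` there are increasing integers `n_0 < ... < n_{2K-1} ≤ N`
with `K ≥ ⌊Nx⌋ - 1` such that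
`(∑_{j<K} |D_{n_{2j+1}}(x) - D_{n_{2j}}(x)|^r)^{1/r} ≥ c N^{1/r} x^{1/r-1}`. -/
theorem dirichlet_variation_lower_bound :
    ∃ c : ℝ, 0 < c ∧ ∃ N₀ : ℕ, ∀ N : ℕ, N₀ ≤ N → ∀ x : ℝ,
      8 / (N : ℝ) ≤ x → x ≤ 1 / 8 → ∀ r : ℝ, 1 ≤ r →
      ∃ (K : ℕ) (n : ℕ → ℕ),
        (⌊(N : ℝ) * x⌋ - 1 ≤ (K : ℤ)) ∧
        (∀ j : ℕ, j + 1 < 2 * K → n j < n (j + 1)) ∧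
        (∀ j : ℕ, j < 2 * K → n j ≤ N) ∧
        c * (N : ℝ) ^ (1 / r) * x ^ (1 / r - 1) ≤
          (∑ j ∈ Finset.range K,
            |dirichletKer (n (2 * j + 1)) x - dirichletKer (n (2 * j)) x| ^ r) ^ (1 / r) := by
  refine ⟨1/4, by norm_num, 1, ?_⟩
  intro N hN x hx1 hx2 r hr
  have hNpos : (0:ℝ) < N := by exact_mod_cast hN
  have hx : 0 < x := lt_of_lt_of_le (by positivity) hx1
  have hNx : (8:ℝ) ≤ N * x := by
    rw [div_le_iff₀ hNpos] at hx1; linarith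
  have hfloor : (8:ℤ) ≤ ⌊(N:ℝ) * x⌋ := Int.le_floor.mpr (by exact_mod_cast hNx)
  set K : ℕ := (⌊(N:ℝ) * x⌋ - 1).toNat with hKdef
  have hKZ : (K : ℤ) = ⌊(N:ℝ) * x⌋ - 1 := Int.toNat_of_nonneg (by omega)
  have hKR : (K : ℝ) = (⌊(N:ℝ) * x⌋ : ℝ) - 1 := by exact_mod_cast hKZ
  have hKub : (K : ℝ) ≤ N * x - 1 := by
    rw [hKR]; have := Int.floor_le ((N:ℝ) * x); linarith
  have hKlb : (3/4) * (N * x) ≤ (K : ℝ) := by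
    rw [hKR]
    have := Int.lt_floor_add_one ((N:ℝ) * x)
    linarith
  have hKpos : 0 < (K:ℝ) := by nlinarith
  have hr0 : (0:ℝ) < r := lt_of_lt_of_le one_pos hr
  have hrinv : (0:ℝ) < 1/r := by positivity
  refine ⟨K, nfun x, by omega, ?_, ?_, ?_⟩
  · intro j _
    have h1 := (nfun_mem x hx hx2 j).2
    have h2 := (nfun_mem x hx hx2 (j+1)).1
    have hlt : ((2 * nfun x j + 1 : ℕ) : ℝ) * x < ((2 * nfun x (j+1) + 1 : ℕ) : ℝ) * x := by
      push_cast at h1 h2 ⊢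
      linarith
    have h3 := (mul_lt_mul_iff_left₀ hx).mp hlt
    have : (nfun x j : ℝ) < nfun x (j+1) := by push_cast at h3; linarith
    exact_mod_cast this
  · intro j hj
    have h1 := (nfun_mem x hx hx2 j).2
    have hj' : (j:ℝ) + 1 ≤ 2*K := by exact_mod_cast hj
    have hlt : ((2 * nfun x j + 1 : ℕ) : ℝ) * x < (2*(N:ℝ)) * x := by
      push_cast at h1 ⊢
      nlinarith
    have h3 := (mul_lt_mul_iff_left₀ hx).mp hlt
    have : (nfun x j : ℝ) ≤ N := by push_cast at h3; linarith
    exact_mod_cast this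
  · -- the main estimate
    have hpi := Real.pi_pos
    set s := Real.sin (Real.pi * x) with hs
    have hspos : 0 < s := Real.sin_pos_of_pos_of_lt_pi (by positivity) (by nlinarith)
    have hsle : s ≤ Real.pi * x := Real.sin_le (by positivity)
    set c : ℝ := Real.sqrt 2 / (Real.pi * x) with hc
    have hcpos : 0 < c := by
      have : (0:ℝ) < Real.sqrt 2 := Real.sqrt_pos.mpr (by norm_num)
      positivity
    have hterm : ∀ j ∈ Finset.range K,
        c ^ r ≤ |dirichletKer (nfun x (2*j+1)) x - dirichletKer (nfun x (2*j)) x| ^ r := by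
      intro j _
      have hA := nfun_mem x hx hx2 (2*j)
      have hB := nfun_mem x hx hx2 (2*j+1)
      set a := nfun x (2*j) with ha
      set b := nfun x (2*j+1) with hb
      have hsa : Real.sqrt 2 / 2 ≤ Real.sin ((2*(a:ℝ)+1) * Real.pi * x) := by
        have h := sin_even j (((2*a+1 : ℕ) : ℝ) * x)
          (by push_cast; push_cast at hA; linarith [hA.1])
          (by push_cast; push_cast at hA; linarith [hA.2])
        rw [show Real.pi * (((2*a+1 : ℕ) : ℝ) * x) = (2*(a:ℝ)+1) * Real.pi * x by push_cast; ring] at h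
        exact h
      have hsb : Real.sin ((2*(b:ℝ)+1) * Real.pi * x) ≤ -(Real.sqrt 2 / 2) := by
        have h := sin_odd j (((2*b+1 : ℕ) : ℝ) * x)
          (by push_cast; push_cast at hB; linarith [hB.1])
          (by push_cast; push_cast at hB; linarith [hB.2])
        rw [show Real.pi * (((2*b+1 : ℕ) : ℝ) * x) = (2*(b:ℝ)+1) * Real.pi * x by push_cast; ring] at h
        exact h
      have hdiff : c ≤ |dirichletKer b x - dirichletKer a x| := by
        unfold dirichletKer
        rw [← hs, div_sub_div_same]
        set sA := Real.sin ((2*(a:ℝ)+1) * Real.pi * x)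
        set sB := Real.sin ((2*(b:ℝ)+1) * Real.pi * x)
        have habs : |(sB - sA)/s| = (sA - sB)/s := by
          rw [abs_div, abs_of_pos hspos, abs_of_nonpos (by linarith [Real.sqrt_nonneg 2])]
          ring_nf
        rw [habs]
        have hnum : Real.sqrt 2 ≤ sA - sB := by linarith
        calc c = Real.sqrt 2 / (Real.pi * x) := hc
        _ ≤ Real.sqrt 2 / s := by gcongr
        _ ≤ (sA - sB) / s := by gcongr
      exact Real.rpow_le_rpow hcpos.le hdiff hr0.le
    -- sum the K terms
    have hsum : (K:ℝ) * c ^ r ≤ ∑ j ∈ Finset.range K,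
        |dirichletKer (nfun x (2*j+1)) x - dirichletKer (nfun x (2*j)) x| ^ r := by
      calc (K:ℝ) * c ^ r = ∑ _j ∈ Finset.range K, c ^ r := by
            rw [Finset.sum_const, Finset.card_range, nsmul_eq_mul]
      _ ≤ _ := Finset.sum_le_sum hterm
    have hrr : r * (1/r) = 1 := by field_simp
    have hmain : ((K:ℝ) * c ^ r) ^ (1/r) = (K:ℝ) ^ (1/r) * c := by
      rw [Real.mul_rpow hKpos.le (by positivity), ← Real.rpow_mul hcpos.le, hrr, Real.rpow_one]
    -- lower bound on K^(1/r)
    have hA : (0:ℝ) ≤ ((N:ℝ)*x) ^ (1/r) := Real.rpow_nonneg (by positivity) _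
    have h34 : ((3:ℝ)/4) ≤ ((3:ℝ)/4) ^ (1/r) := by
      have h := Real.rpow_le_rpow_of_exponent_ge (by norm_num : (0:ℝ) < 3/4)
        (by norm_num) (by rw [div_le_one hr0]; exact hr : 1/r ≤ 1)
      rwa [Real.rpow_one] at h
    have hK14 : (3/4) * ((N:ℝ)*x) ^ (1/r) ≤ (K:ℝ) ^ (1/r) := by
      calc (3/4) * ((N:ℝ)*x) ^ (1/r) ≤ ((3:ℝ)/4) ^ (1/r) * ((N:ℝ)*x) ^ (1/r) :=
            mul_le_mul_of_nonneg_right h34 hA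
      _ = ((3/4) * ((N:ℝ)*x)) ^ (1/r) := (Real.mul_rpow (by norm_num) (by positivity)).symm
      _ ≤ (K:ℝ) ^ (1/r) := Real.rpow_le_rpow (by positivity) hKlb hrinv.le
    -- π ≤ 3√2
    have hsqrt : (1.41:ℝ) ≤ Real.sqrt 2 := by
      have h2 : ((1.41:ℝ))^2 ≤ 2 := by norm_num
      nlinarith [Real.sq_sqrt (by norm_num : (0:ℝ) ≤ 2), Real.sqrt_nonneg 2]
    have hpi3 : Real.pi ≤ 3 * Real.sqrt 2 := by
      have := Real.pi_lt_d2
      linarith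
    -- final assembly
    have hxr : x ^ (1/r - 1) = x ^ (1/r) / x := by
      rw [Real.rpow_sub hx, Real.rpow_one]
    have hNxr : (N:ℝ) ^ (1/r) * x ^ (1/r) = ((N:ℝ)*x) ^ (1/r) :=
      (Real.mul_rpow hNpos.le hx.le).symm
    have hfinal : (1/4 : ℝ) * (N:ℝ) ^ (1/r) * x ^ (1/r - 1) ≤ (K:ℝ) ^ (1/r) * c := by
      rw [hxr, hc]
      have key : (1/4 : ℝ) * (((N:ℝ)*x) ^ (1/r)) / x ≤
          ((3/4) * ((N:ℝ)*x) ^ (1/r)) * (Real.sqrt 2 / (Real.pi * x)) := by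
        rw [div_le_iff₀ hx]
        have h1 : ((3/4) * ((N:ℝ)*x) ^ (1/r)) * (Real.sqrt 2 / (Real.pi * x)) * x
            = (3/4) * ((N:ℝ)*x) ^ (1/r) * Real.sqrt 2 / Real.pi := by
          field_simp
        rw [h1, le_div_iff₀ Real.pi_pos]
        have hhint := mul_le_mul_of_nonneg_left hpi3 (by positivity : (0:ℝ) ≤ (1/4) * ((N:ℝ)*x) ^ (1/r))
        nlinarith [hhint]
      calc (1/4 : ℝ) * (N:ℝ) ^ (1/r) * (x ^ (1/r) / x)
          = (1/4 : ℝ) * (((N:ℝ)*x) ^ (1/r)) / x := by rw [← hNxr]; ring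
      _ ≤ ((3/4) * ((N:ℝ)*x) ^ (1/r)) * (Real.sqrt 2 / (Real.pi * x)) := key
      _ ≤ (K:ℝ) ^ (1/r) * (Real.sqrt 2 / (Real.pi * x)) :=
          mul_le_mul_of_nonneg_right hK14 (by positivity)
    calc (1/4 : ℝ) * (N:ℝ) ^ (1/r) * x ^ (1/r - 1) ≤ (K:ℝ) ^ (1/r) * c := hfinal
    _ = ((K:ℝ) * c ^ r) ^ (1/r) := hmain.symm
    _ ≤ _ := Real.rpow_le_rpow (by positivity) hsum hrinv.le
end

section
/- For every n and 8/N ≤ x ≤ 1/8 with N ≥ 1000 and every 0 ≤ k < 2⌊Nx⌋ there exists an integer n_k with 0 ≤ n_k ≤ N and (2n_k + 1)x ∈ (1/4 + k, 3/4 + k); moreover n_k < n_{k+1} whenever both are defined. -/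
set_option maxHeartbeats 1000000 in


/-- For `N ≥ 1000`, `8/N ≤ x ≤ 1/8`, and `K` the largest integer strictly less than `Nx`,
for each `0 ≤ k < 2K` there is an integer `0 ≤ n_k ≤ N` with
`(2 n_k + 1) x ∈ (1/4 + k, 3/4 + k)`, and moreover `n_k < n_{k+1}` whenever both are defined. -/
theorem exists_progression_points (N : ℕ) (hN : 1000 ≤ N) (x : ℝ)
    (hx1 : 8 / (N : ℝ) ≤ x) (hx2 : x ≤ 1 / 8)
    (K : ℤ) (hK : (K : ℝ) < (N : ℝ) * x)
    (hKmax : ∀ m : ℤ, (m : ℝ) < (N : ℝ) * x → m ≤ K) :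
    ∃ n : ℕ → ℕ,
      (∀ k : ℕ, (k : ℤ) < 2 * K →
        n k ≤ N ∧ 1 / 4 + (k : ℝ) < (2 * (n k : ℝ) + 1) * x ∧
          (2 * (n k : ℝ) + 1) * x < 3 / 4 + (k : ℝ)) ∧
      (∀ k : ℕ, (k : ℤ) + 1 < 2 * K → n k < n (k + 1)) := by
  have hNpos : (0:ℝ) < N := by
    have : (1000:ℝ) ≤ N := by exact_mod_cast hN
    linarith
  have hx0 : 0 < x := lt_of_lt_of_le (by positivity) hx1
  set n : ℕ → ℕ := fun k => (⌊(1/4 + (k:ℝ))/(2*x) - 1/2⌋ + 1).toNat with hn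
  have main : ∀ k : ℕ, (k : ℤ) < 2 * K →
      n k ≤ N ∧ 1 / 4 + (k : ℝ) < (2 * (n k : ℝ) + 1) * x ∧
        (2 * (n k : ℝ) + 1) * x < 3 / 4 + (k : ℝ) := by
    intro k hk
    set t : ℝ := (1/4 + (k:ℝ))/(2*x) - 1/2 with ht
    have hk0 : (0:ℝ) ≤ k := Nat.cast_nonneg k
    have ht0 : 0 ≤ t := by
      rw [ht, le_sub_iff_add_le, le_div_iff₀ (by linarith)]
      nlinarith
    have hfl : (0:ℤ) ≤ ⌊t⌋ := Int.floor_nonneg.mpr ht0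
    have hcastZ : ((⌊t⌋ + 1).toNat : ℤ) = ⌊t⌋ + 1 := Int.toNat_of_nonneg (by omega)
    have hcast : ((n k : ℕ) : ℝ) = (⌊t⌋ : ℝ) + 1 := by
      simp only [hn]
      exact_mod_cast congrArg (fun z : ℤ => (z : ℝ)) hcastZ
    have hlt : t < (⌊t⌋ : ℝ) + 1 := Int.lt_floor_add_one t
    have hle : (⌊t⌋ : ℝ) ≤ t := Int.floor_le t
    have hdiv : t * (2*x) = 1/4 + (k:ℝ) - x := by
      rw [ht]; field_simp
    -- k ≤ 2K - 1 as reals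
    have hkK : (k:ℝ) ≤ 2 * (K:ℝ) - 1 := by
      have h : (k:ℤ) ≤ 2*K - 1 := by omega
      have h' : (k:ℝ) ≤ ((2*K - 1 : ℤ) : ℝ) := by exact_mod_cast h
      push_cast at h'; linarith
    refine ⟨?_, ?_, ?_⟩
    · -- n k ≤ N
      have hNbound : (⌊t⌋ : ℝ) + 1 < N := by
        have h1 : ((⌊t⌋:ℝ) + 1) * (2*x) ≤ t * (2*x) + 2*x := by nlinarith
      -- t*2x + 2x = 1/4 + k + x ≤ 1/4 + 2K - 1 + x < 2Nx - 3/4 + x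
        have h2 : ((⌊t⌋:ℝ) + 1) * (2*x) < (N:ℝ) * (2*x) := by
          rw [hdiv] at h1; nlinarith
        exact lt_of_mul_lt_mul_right h2 (by linarith)
      have hZ : (⌊t⌋ + 1 : ℤ) < (N : ℤ) := by exact_mod_cast hNbound
      simp only [hn]
      rw [← ht]
      omega
    · rw [hcast]
      have : t * (2*x) < ((⌊t⌋:ℝ) + 1) * (2*x) := by nlinarith
      rw [hdiv] at this; nlinarith
    · rw [hcast]
      have : ((⌊t⌋:ℝ) + 1) * (2*x) ≤ t * (2*x) + 2*x := by nlinarith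
      rw [hdiv] at this; nlinarith
  clear_value n
  refine ⟨n, main, ?_⟩
  intro k hk
  obtain ⟨-, h1, h2⟩ := main k (by omega)
  obtain ⟨-, h3, -⟩ := main (k+1) (by push_cast; omega)
  have hcast : ((k+1 : ℕ) : ℝ) = (k:ℝ) + 1 := by push_cast; ring
  rw [hcast] at h3
  have hlt : (2*(n k:ℝ)+1)*x < (2*(n (k+1):ℝ)+1)*x := by linarith
  have h4 : (2*(n k:ℝ)+1) < 2*(n (k+1):ℝ)+1 := (mul_lt_mul_iff_left₀ hx0).mp hlt
  have h5 : (n k:ℝ) < (n (k+1):ℝ) := by linarith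
  exact_mod_cast h5
end
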